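/- Let D be an abelian group and let A₁, A₂, B₁, B₂ be subgroups of D such that A₂ ≤ A₁, B₂ ≤ B₁, D = A₁B₂ = A₂B₁, and A₁∩B₂ = A₂∩B₁. Let ψ₂ : A₂ → ℂˣ and χ₂ : B₂ → ℂˣ be characters that agree on A₂∩B₂. Let X be the set of characters of A₁ extending ψ₂, Y the set of characters of B₁ extending χ₂, and Z the set of pairs (ψ₁,χ₁) ∈ X × Y such that ψ₁ and χ₁ agree on A₁∩B₁. Then: (1) the map θ ↦ (θ|_{A₁}, θ|_{B₁}) is a bijection from the set of characters of D that extend both ψ₂ and χ₂ onto Z; (2) Z is the graph of a bijection between X and Y, i.e. for every ψ₁ ∈ X there is exactly one χ₁ ∈ Y with (ψ₁,χ₁) ∈ Z, and for every χ₁ ∈ Y there is exactly one ψ₁ ∈ X with (ψ₁,χ₁) ∈ Z. -/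
import Mathlib


lemma stmt12_pair_eq {D : Type*} [CommGroup D] {H K : Subgroup D}
    (φ : H →* ℂˣ) (η : K →* ℂˣ)
    (hc : ∀ (x : D) (h1 : x ∈ H) (h2 : x ∈ K), φ ⟨x, h1⟩ = η ⟨x, h2⟩)
    (a a' : H) (b b' : K) (hab : (a : D) * b = (a' : D) * b') :
    φ a * η b = φ a' * η b' := by
  have hg : ((a'⁻¹ * a : H) : D) = ((b' * b⁻¹ : K) : D) := by
    have h2 : (a' : D)⁻¹ * ((a : D) * b) * (b : D)⁻¹ =
        (a' : D)⁻¹ * ((a' : D) * b') * (b : D)⁻¹ := by rw [hab]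
    push_cast
    simpa [mul_assoc, mul_comm, mul_left_comm] using h2
  have hmem : ((a'⁻¹ * a : H) : D) ∈ K := hg ▸ (b' * b⁻¹ : K).2
  have h1 : φ (a'⁻¹ * a) = η (b' * b⁻¹) := by
    rw [hc _ (a'⁻¹ * a : H).2 hmem]
    congr 1
    exact Subtype.ext hg
  have h2 : (φ a')⁻¹ * φ a = η b' * (η b)⁻¹ := by
    simpa [map_mul, map_inv] using h1
  rw [inv_mul_eq_iff_eq_mul] at h2
  rw [h2]
  group

lemma stmt12_glue {D : Type*} [CommGroup D] (H K : Subgroup D) (hHK : H ⊔ K = ⊤)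
    (φ : H →* ℂˣ) (η : K →* ℂˣ)
    (hc : ∀ (x : D) (h1 : x ∈ H) (h2 : x ∈ K), φ ⟨x, h1⟩ = η ⟨x, h2⟩) :
    ∃ θ : D →* ℂˣ, (∀ (x : D) (h : x ∈ H), θ x = φ ⟨x, h⟩) ∧
      (∀ (x : D) (h : x ∈ K), θ x = η ⟨x, h⟩) := by
  have hx : ∀ x : D, ∃ p : H × K, (p.1 : D) * (p.2 : D) = x := by
    intro x
    have hxm : x ∈ H ⊔ K := hHK ▸ Subgroup.mem_top x
    rw [Subgroup.mem_sup] at hxm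
    obtain ⟨a, ha, b, hb, hab⟩ := hxm
    exact ⟨(⟨a, ha⟩, ⟨b, hb⟩), hab⟩
  choose p hp using hx
  have key : ∀ (x : D) (a : H) (b : K), (a : D) * b = x →
      φ (p x).1 * η (p x).2 = φ a * η b := fun x a b h =>
    stmt12_pair_eq φ η hc _ a _ b (by rw [hp x, ← h])
  refine ⟨{ toFun := fun x => φ (p x).1 * η (p x).2,
            map_one' := ?_, map_mul' := ?_ }, ?_, ?_⟩
  · simpa using key 1 1 1 (by simp)
  · intro x y
    have h := key (x * y) ((p x).1 * (p y).1) ((p x).2 * (p y).2)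
      (by push_cast; rw [mul_mul_mul_comm, hp x, hp y])
    simp only [map_mul] at h
    simp only [h]
    simp [mul_assoc, mul_comm, mul_left_comm]
  · intro x h
    simpa using key x ⟨x, h⟩ 1 (by simp)
  · intro x h
    simpa using key x 1 ⟨x, h⟩ (by simp)

lemma stmt12_unique_top {D : Type*} [CommGroup D] (H K : Subgroup D) (hHK : H ⊔ K = ⊤)
    (θ θ' : D →* ℂˣ) (h1 : ∀ x ∈ H, θ x = θ' x) (h2 : ∀ x ∈ K, θ x = θ' x) : θ = θ' := by
  ext x
  have hxm : x ∈ H ⊔ K := hHK ▸ Subgroup.mem_top x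
  rw [Subgroup.mem_sup] at hxm
  obtain ⟨a, ha, b, hb, hab⟩ := hxm
  rw [← hab, map_mul, map_mul, h1 a ha, h2 b hb]

lemma stmt12_unique_on {D : Type*} [CommGroup D] (H K L : Subgroup D) (hHK : H ⊔ K = ⊤)
    (hK : K ≤ L) (χ χ' : L →* ℂˣ)
    (h1 : ∀ (x : D) (hx : x ∈ K), χ ⟨x, hK hx⟩ = χ' ⟨x, hK hx⟩)
    (h2 : ∀ (x : D) (hx1 : x ∈ H) (hx2 : x ∈ L), χ ⟨x, hx2⟩ = χ' ⟨x, hx2⟩) : χ = χ' := by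
  ext b
  have hxm : (b : D) ∈ H ⊔ K := hHK ▸ Subgroup.mem_top _
  rw [Subgroup.mem_sup] at hxm
  obtain ⟨a, ha, c, hc, hac⟩ := hxm
  have haL : a ∈ L := by
    have : a = (b : D) * c⁻¹ := by rw [← hac, mul_inv_cancel_right]
    rw [this]; exact mul_mem b.2 (inv_mem (hK hc))
  have hb : b = ⟨a, haL⟩ * ⟨c, hK hc⟩ := Subtype.ext (by simp [hac])
  rw [hb, map_mul, map_mul, h1 c hc, h2 a ha haL]

/-- Let `D` be an abelian group with subgroups `A₂ ≤ A₁`, `B₂ ≤ B₁` satisfying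
`D = A₁B₂ = A₂B₁` and `A₁ ∩ B₂ = A₂ ∩ B₁`, and let `ψ₂`, `χ₂` be consistent characters of
`A₂`, `B₂`. Then (1) restriction `θ ↦ (θ|_{A₁}, θ|_{B₁})` is a bijection from the set of
characters of `D` extending both `ψ₂` and `χ₂` onto the set `Z` of consistent pairs of
extensions, and (2) `Z` is the graph of a bijection between the set `X` of extensions of
`ψ₂` to `A₁` and the set `Y` of extensions of `χ₂` to `B₁`. -/
theorem stmt_12 (D : Type*) [CommGroup D] (A₁ A₂ B₁ B₂ : Subgroup D)
    (hA : A₂ ≤ A₁) (hB : B₂ ≤ B₁)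
    (hD1 : A₁ ⊔ B₂ = ⊤) (hD2 : A₂ ⊔ B₁ = ⊤)
    (hint : A₁ ⊓ B₂ = A₂ ⊓ B₁)
    (ψ₂ : A₂ →* ℂˣ) (χ₂ : B₂ →* ℂˣ)
    (hcons : ∀ (x : D) (h1 : x ∈ A₂) (h2 : x ∈ B₂), ψ₂ ⟨x, h1⟩ = χ₂ ⟨x, h2⟩) :
    Set.BijOn (fun θ : D →* ℂˣ => (θ.comp A₁.subtype, θ.comp B₁.subtype))
      {θ : D →* ℂˣ | (∀ (x : D) (h : x ∈ A₂), θ x = ψ₂ ⟨x, h⟩) ∧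
        (∀ (x : D) (h : x ∈ B₂), θ x = χ₂ ⟨x, h⟩)}
      {p : (A₁ →* ℂˣ) × (B₁ →* ℂˣ) |
        (∀ (x : D) (h : x ∈ A₂), p.1 ⟨x, hA h⟩ = ψ₂ ⟨x, h⟩) ∧
        (∀ (x : D) (h : x ∈ B₂), p.2 ⟨x, hB h⟩ = χ₂ ⟨x, h⟩) ∧
        (∀ (x : D) (h1 : x ∈ A₁) (h2 : x ∈ B₁), p.1 ⟨x, h1⟩ = p.2 ⟨x, h2⟩)} ∧
    (∀ ψ₁ : A₁ →* ℂˣ, (∀ (x : D) (h : x ∈ A₂), ψ₁ ⟨x, hA h⟩ = ψ₂ ⟨x, h⟩) →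
      ∃! χ₁ : B₁ →* ℂˣ, (∀ (x : D) (h : x ∈ B₂), χ₁ ⟨x, hB h⟩ = χ₂ ⟨x, h⟩) ∧
        (∀ (x : D) (h1 : x ∈ A₁) (h2 : x ∈ B₁), ψ₁ ⟨x, h1⟩ = χ₁ ⟨x, h2⟩)) ∧
    (∀ χ₁ : B₁ →* ℂˣ, (∀ (x : D) (h : x ∈ B₂), χ₁ ⟨x, hB h⟩ = χ₂ ⟨x, h⟩) →
      ∃! ψ₁ : A₁ →* ℂˣ, (∀ (x : D) (h : x ∈ A₂), ψ₁ ⟨x, hA h⟩ = ψ₂ ⟨x, h⟩) ∧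
        (∀ (x : D) (h1 : x ∈ A₁) (h2 : x ∈ B₁), ψ₁ ⟨x, h1⟩ = χ₁ ⟨x, h2⟩)) := by
  have hA₁B₁ : A₁ ⊔ B₁ = ⊤ := top_unique (hD1 ▸ sup_le_sup_left hB A₁)
  refine ⟨⟨?_, ?_, ?_⟩, ?_, ?_⟩
  · -- MapsTo
    rintro θ ⟨h1, h2⟩
    exact ⟨fun x h => h1 x h, fun x h => h2 x h,
      fun x _ _ => rfl⟩
  · -- InjOn
    rintro θ hθ θ' hθ' heq
    have e1 : θ.comp A₁.subtype = θ'.comp A₁.subtype := congrArg Prod.fst heq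
    have e2 : θ.comp B₁.subtype = θ'.comp B₁.subtype := congrArg Prod.snd heq
    refine stmt12_unique_top A₁ B₁ hA₁B₁ θ θ' (fun x hx => ?_) (fun x hx => ?_)
    · exact DFunLike.congr_fun e1 ⟨x, hx⟩
    · exact DFunLike.congr_fun e2 ⟨x, hx⟩
  · -- SurjOn
    rintro p ⟨hp1, hp2, hp3⟩
    obtain ⟨θ, hθA, hθB⟩ := stmt12_glue A₁ B₁ hA₁B₁ p.1 p.2 hp3
    refine ⟨θ, ⟨fun x h => (hθA x (hA h)).trans (hp1 x h),
      fun x h => (hθB x (hB h)).trans (hp2 x h)⟩, ?_⟩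
    have e1 : θ.comp A₁.subtype = p.1 := MonoidHom.ext fun a => hθA a a.2
    have e2 : θ.comp B₁.subtype = p.2 := MonoidHom.ext fun b => hθB b b.2
    simp [e1, e2]
  · -- part 2a
    intro ψ₁ hψ₁
    have hc' : ∀ (x : D) (h1 : x ∈ A₁) (h2 : x ∈ B₂), ψ₁ ⟨x, h1⟩ = χ₂ ⟨x, h2⟩ := by
      intro x h1 h2
      have hm : x ∈ A₂ ⊓ B₁ := hint ▸ (⟨h1, h2⟩ : x ∈ A₁ ⊓ B₂)
      exact (hψ₁ x hm.1).trans (hcons x hm.1 h2)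
    obtain ⟨θ, hθA, hθB⟩ := stmt12_glue A₁ B₂ hD1 ψ₁ χ₂ hc'
    refine ⟨θ.comp B₁.subtype, ⟨fun x h => (hθB x h : _), fun x h1 h2 => (hθA x h1).symm⟩,
      fun χ' ⟨hχ'1, hχ'2⟩ => ?_⟩
    refine stmt12_unique_on A₁ B₂ B₁ hD1 hB χ' (θ.comp B₁.subtype)
      (fun x hx => (hχ'1 x hx).trans (hθB x hx).symm)
      (fun x hx1 hx2 => (hχ'2 x hx1 hx2).symm.trans (hθA x hx1).symm)
  · -- part 2b
    intro χ₁ hχ₁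
    have hc' : ∀ (x : D) (h1 : x ∈ A₂) (h2 : x ∈ B₁), ψ₂ ⟨x, h1⟩ = χ₁ ⟨x, h2⟩ := by
      intro x h1 h2
      have hm : x ∈ A₁ ⊓ B₂ := hint ▸ (⟨h1, h2⟩ : x ∈ A₂ ⊓ B₁)
      exact (hcons x h1 hm.2).trans (hχ₁ x hm.2).symm
    obtain ⟨θ, hθA, hθB⟩ := stmt12_glue A₂ B₁ hD2 ψ₂ χ₁ hc'
    refine ⟨θ.comp A₁.subtype, ⟨fun x h => (hθA x h : _), fun x h1 h2 => (hθB x h2 : _)⟩,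
      fun ψ' ⟨hψ'1, hψ'2⟩ => ?_⟩
    refine stmt12_unique_on B₁ A₂ A₁ (sup_comm A₂ B₁ ▸ hD2) hA ψ' (θ.comp A₁.subtype)
      (fun x hx => (hψ'1 x hx).trans (hθA x hx).symm)
      (fun x hx1 hx2 => (hψ'2 x hx2 hx1).trans (hθB x hx1).symm)
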